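/- Let m > 2 be an integer, let Box = [−1, m−1] ⊆ ℝ, and suppose f₁, f₂, f₃ is normalized Fano data on Box consisting of exactly three functions (with d = 1). Then m ∈ {3, 4, 6}. -/

import Mathlib

open scoped BigOperators

noncomputable section

/-- Embedding of a lattice point of `ℤ^d × ℤ` into `ℝ^d × ℝ`. -/
def latticeEmbed (d : ℕ) (p : (Fin d → ℤ) × ℤ) : (Fin d → ℝ) × ℝ :=
  (fun i => (p.1 i : ℝ), (p.2 : ℝ))

/-- `Box ⊆ ℝ^d` is a lattice polytope: the convex hull of a finite set of lattice points. -/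
def IsLatticePolytope (d : ℕ) (Box : Set (Fin d → ℝ)) : Prop :=
  ∃ S : Finset (Fin d → ℤ),
    Box = convexHull ℝ ((fun v : Fin d → ℤ => fun i => (v i : ℝ)) '' (S : Set (Fin d → ℤ)))

/-- The pairing of `x ∈ ℝ^d` with an integral vector `u ∈ ℤ^d`. -/
def dotZ (d : ℕ) (x : Fin d → ℝ) (u : Fin d → ℤ) : ℝ := ∑ i, x i * (u i : ℝ)

/-- `f` is an integral concave piecewise-affine function on `Box`: there is a finite set
`S ⊆ ℤ^d × ℤ` such that `Box` is the projection of `conv S` and `f x` is the largest `t`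
with `(x, t) ∈ conv S`. -/
def IsICPA (d : ℕ) (Box : Set (Fin d → ℝ)) (f : (Fin d → ℝ) → ℝ) : Prop :=
  ∃ S : Finset ((Fin d → ℤ) × ℤ),
    Prod.fst '' (convexHull ℝ (latticeEmbed d '' (S : Set ((Fin d → ℤ) × ℤ)))) = Box ∧
    ∀ x ∈ Box,
      IsGreatest {t : ℝ | (x, t) ∈ convexHull ℝ (latticeEmbed d '' (S : Set ((Fin d → ℤ) × ℤ)))}
        (f x)

/-- Every facet of the graph of `f` lies at height one. -/
def AtHeightOne (d : ℕ) (Box : Set (Fin d → ℝ)) (f : (Fin d → ℝ) → ℝ) : Prop :=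
  ∀ x ∈ Box, ∃ (u : Fin d → ℤ) (m : ℤ),
    |dotZ d x u + (m : ℝ) * f x| = 1 ∧
    ∀ y ∈ Box, dotZ d y u + (m : ℝ) * f y ≤ dotZ d x u + (m : ℝ) * f x

/-- A combinatorial divisorial polytope (CDP) with base in `ℝ^d`. -/
structure CDP (d : ℕ) where
  box : Set (Fin d → ℝ)
  funcs : List ((Fin d → ℝ) → ℝ)
  lattice : IsLatticePolytope d box
  fullDim : (interior box).Nonempty
  icpa : ∀ f ∈ funcs, IsICPA d box f
  posSum : ∀ x ∈ interior box, 0 < (funcs.map (fun f => f x)).sum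

/-- Two functions agree on a set. -/
def EqOnBox (d : ℕ) (B : Set (Fin d → ℝ)) (f g : (Fin d → ℝ) → ℝ) : Prop :=
  ∀ x ∈ B, f x = g x

/-- Move (i): addition of the zero function. -/
def MoveZero (d : ℕ) (P Q : CDP d) : Prop :=
  Q.box = P.box ∧
    List.Forall₂ (EqOnBox d P.box) Q.funcs (P.funcs ++ [fun _ => (0 : ℝ)])

/-- Move (ii): permutation of the functions. -/
def MovePerm (d : ℕ) (P Q : CDP d) : Prop :=
  Q.box = P.box ∧ ∃ L, List.Perm L P.funcs ∧ List.Forall₂ (EqOnBox d P.box) Q.funcs L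

/-- Move (iii): integral affine transformation of the base. -/
def MoveAffine (d : ℕ) (P Q : CDP d) : Prop :=
  ∃ (A B : Matrix (Fin d) (Fin d) ℤ) (t : Fin d → ℤ),
    A * B = 1 ∧ B * A = 1 ∧
    Q.box = (fun x : Fin d → ℝ => fun i => (∑ j, (A i j : ℝ) * x j) + (t i : ℝ)) '' P.box ∧
    List.Forall₂ (EqOnBox d Q.box) Q.funcs
      (P.funcs.map (fun f => f ∘ fun x : Fin d → ℝ => fun i => ∑ j, (B i j : ℝ) * (x j - (t j : ℝ))))

/-- Move (iv): translation by integers summing to zero. -/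
def MoveTranslate (d : ℕ) (P Q : CDP d) : Prop :=
  Q.box = P.box ∧ ∃ α : List ℤ, α.length = P.funcs.length ∧ α.sum = 0 ∧
    List.Forall₂ (EqOnBox d P.box) Q.funcs
      (List.zipWith (fun f (a : ℤ) => fun x => f x + (a : ℝ)) P.funcs α)

/-- Move (v): shearing by a covector with integral coefficients summing to zero. -/
def MoveShear (d : ℕ) (P Q : CDP d) : Prop :=
  Q.box = P.box ∧ ∃ (v : Fin d → ℤ) (β : List ℤ), β.length = P.funcs.length ∧ β.sum = 0 ∧
    List.Forall₂ (EqOnBox d P.box) Q.funcs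
      (List.zipWith (fun f (b : ℤ) => fun x => f x + (b : ℝ) * dotZ d x v) P.funcs β)

/-- One elementary move between CDPs. -/
def CDPMove (d : ℕ) (P Q : CDP d) : Prop :=
  MoveZero d P Q ∨ MovePerm d P Q ∨ MoveAffine d P Q ∨ MoveTranslate d P Q ∨ MoveShear d P Q

/-- Equivalence of CDPs: the smallest equivalence relation generated by the moves. -/
def CDPEquiv (d : ℕ) : CDP d → CDP d → Prop := Relation.EqvGen (CDPMove d)

/-- The on-the-nose Fano conditions for a CDP. -/
def IsFanoWitness (d : ℕ) (P : CDP d) : Prop :=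
  ∃ a : List ℤ, a.sum = -2 ∧
    (0 : Fin d → ℝ) ∈ interior P.box ∧
    List.Forall₂ (fun f (ai : ℤ) =>
      AtHeightOne d P.box (fun x => f x + (ai : ℝ) + 1) ∧ 0 < f 0 + (ai : ℝ) + 1)
      P.funcs a ∧
    ∀ x ∈ frontier P.box,
      (P.funcs.map (fun f => f x)).sum = 0 ∨
      ∃ u : Fin d → ℤ, dotZ d x u = 1 ∧ ∀ y ∈ P.box, dotZ d y u ≤ 1

/-- A CDP is Fano if it is equivalent to one satisfying the Fano conditions. -/
def IsFano (d : ℕ) (P : CDP d) : Prop := ∃ Q : CDP d, CDPEquiv d P Q ∧ IsFanoWitness d Q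

/-- A CDP is toric if it is equivalent to one with at most two functions. -/
def IsToric (d : ℕ) (P : CDP d) : Prop := ∃ Q : CDP d, CDPEquiv d P Q ∧ Q.funcs.length ≤ 2

/-- `f` agrees on `Box` with an affine function with integral slope and constant. -/
def IsIntegralAffineOn (d : ℕ) (Box : Set (Fin d → ℝ)) (f : (Fin d → ℝ) → ℝ) : Prop :=
  ∃ (u : Fin d → ℤ) (c : ℤ), ∀ x ∈ Box, f x = dotZ d x u + (c : ℝ)

/-- Normalized Fano data on `Box`: the translated functions `Ψᵢ' = Ψᵢ + aᵢ + 1` of a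
normalized Fano CDP. -/
def NormalizedFanoData (d n : ℕ) (Box : Set (Fin d → ℝ))
    (f : Fin n → (Fin d → ℝ) → ℝ) : Prop :=
  (∀ i, IsICPA d Box (f i)) ∧
  (∀ i, AtHeightOne d Box (f i)) ∧
  (∀ i, 0 < f i 0) ∧
  (∀ i, ¬ IsIntegralAffineOn d Box (f i)) ∧
  (∀ x ∈ Box, (n : ℝ) - 2 ≤ ∑ i, f i x) ∧
  (∀ x ∈ interior Box, (n : ℝ) - 2 < ∑ i, f i x) ∧
  (∀ x ∈ frontier Box,
    (∑ i, f i x) = (n : ℝ) - 2 ∨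
    ∃ u : Fin d → ℤ, dotZ d x u = 1 ∧ ∀ y ∈ Box, dotZ d y u ≤ 1)

/-- `α_v = min{1, max{α ≥ 0 : ±αv ∈ Box}}`. -/
def alphaV (d : ℕ) (Box : Set (Fin d → ℝ)) (v : Fin d → ℤ) : ℝ :=
  min 1 (sSup {α : ℝ | 0 ≤ α ∧ (fun i => α * (v i : ℝ)) ∈ Box ∧
    (fun i => -(α * (v i : ℝ))) ∈ Box})

/-- A primitive integral vector: the gcd of its coordinates is 1. -/
def IsPrimitive (d : ℕ) (v : Fin d → ℤ) : Prop := Finset.univ.gcd v = 1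

/-- `f` restricted to `Box ∩ ℝ·v` is affine. -/
def AffineOnLine (d : ℕ) (Box : Set (Fin d → ℝ)) (v : Fin d → ℤ)
    (f : (Fin d → ℝ) → ℝ) : Prop :=
  ∃ s c : ℝ, ∀ t : ℝ, (fun i => t * (v i : ℝ)) ∈ Box →
    f (fun i => t * (v i : ℝ)) = s * t + c

/-- The interval `[a,b]` as a subset of `ℝ¹ = (Fin 1 → ℝ)`. -/
def intervalBox (a b : ℤ) : Set (Fin 1 → ℝ) := {p : Fin 1 → ℝ | (a : ℝ) ≤ p 0 ∧ p 0 ≤ (b : ℝ)}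

/-- The `d`-dimensional cross polytope `conv{±e₁, …, ±e_d}`. -/
def crossPolytope (d : ℕ) : Set (Fin d → ℝ) :=
  convexHull ℝ {x : Fin d → ℝ | ∃ j : Fin d, x = Pi.single j 1 ∨ x = -Pi.single j 1}

namespace BL

/-- embedding of `ℝ` into `Fin 1 → ℝ` -/
def ee (t : ℝ) : Fin 1 → ℝ := fun _ => t

lemma ee_eq (p : Fin 1 → ℝ) : ee (p 0) = p := by
  funext i; rw [Subsingleton.elim i 0]; rfl

lemma ee_zero : ee 0 = (0 : Fin 1 → ℝ) := rfl

lemma dotZ_ee (t : ℝ) (u : Fin 1 → ℤ) : dotZ 1 (ee t) u = t * (u 0 : ℝ) := by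
  simp [dotZ, ee]

lemma mem_ibox {m : ℤ} {y : ℝ} :
    ee y ∈ intervalBox (-1) (m - 1) ↔ y ∈ Set.Icc (-1 : ℝ) ((m : ℝ) - 1) := by
  unfold intervalBox ee
  constructor
  · rintro ⟨h1, h2⟩
    refine ⟨by simpa using h1, ?_⟩
    have : ((m - 1 : ℤ) : ℝ) = (m:ℝ) - 1 := by push_cast; ring
    simpa [this] using h2
  · rintro ⟨h1, h2⟩
    refine ⟨by simpa using h1, ?_⟩
    show y ≤ ((m - 1 : ℤ) : ℝ)
    push_cast; linarith

/-- slope of `f` on the unit interval `[j, j+1]` -/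
def rho (f : (Fin 1 → ℝ) → ℝ) (j : ℤ) : ℝ := f (ee ((j:ℝ)+1)) - f (ee (j:ℝ))


variable {m : ℤ} {f : (Fin 1 → ℝ) → ℝ} {S : Finset ((Fin 1 → ℤ) × ℤ)}

lemma intB {j : ℤ} (h1 : -1 ≤ j) (h2 : j ≤ m - 1) : ee (j:ℝ) ∈ intervalBox (-1) (m-1) := by
  rw [mem_ibox]
  constructor
  · exact_mod_cast h1
  · have : (j:ℝ) ≤ ((m-1 : ℤ):ℝ) := by exact_mod_cast h2
    push_cast at this
    linarith

/-- downward chain of values along equal slopes -/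
lemma chain_vals (b e : ℤ) (K P : ℤ)
    (hs : ∀ j : ℤ, b ≤ j → j ≤ e - 1 → (K:ℝ) * rho f j = (P:ℝ))
    (hend : (K:ℝ) * f (ee (e:ℝ)) = P*(e:ℝ) + 1) :
    ∀ j : ℤ, b ≤ j → j ≤ e → (K:ℝ) * f (ee (j:ℝ)) = P*(j:ℝ) + 1 := by
  have H : ∀ n : ℕ, ∀ j : ℤ, b ≤ j → j ≤ e → e - j = n → (K:ℝ) * f (ee (j:ℝ)) = P*(j:ℝ) + 1 := by
    intro n
    induction n with
    | zero =>
      intro j _ _ hn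
      have : j = e := by omega
      subst this
      exact hend
    | succ n ih =>
      intro j hbj hje hn
      have hj1 : j + 1 ≤ e := by omega
      have h2 := ih (j+1) (by omega) hj1 (by omega)
      have h3 := hs j hbj (by omega)
      have hc : ((j+1 : ℤ):ℝ) = (j:ℝ) + 1 := by push_cast; ring
      rw [hc] at h2
      unfold rho at h3
      linear_combination h2 - h3
  intro j hbj hje
  exact H (e - j).toNat j hbj hje (by omega)

/-- chain of equal slopes up to `e` when there is no breakpoint in `(b, e]` -/
lemma rho_chain (b e : ℤ)
    (hnb : ∀ j : ℤ, b < j → j ≤ e → rho f (j-1) = rho f j) :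
    ∀ j : ℤ, b ≤ j → j ≤ e → rho f j = rho f e := by
  have H : ∀ n : ℕ, ∀ j : ℤ, b ≤ j → j ≤ e → e - j = n → rho f j = rho f e := by
    intro n
    induction n with
    | zero =>
      intro j _ _ hn
      have hje2 : j = e := by omega
      rw [hje2]
    | succ n ih =>
      intro j hbj hje hn
      have h1 : rho f j = rho f (j+1) := by
        have := hnb (j+1) (by omega) (by omega)
        simpa using this
      rw [h1]
      exact ih (j+1) (by omega) (by omega) (by omega)
  intro j hbj hje
  exact H (e - j).toNat j hbj hje (by omega)

lemma rep
    (hproj : Prod.fst '' (convexHull ℝ (latticeEmbed 1 '' (S : Set ((Fin 1 → ℤ) × ℤ))))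
      = intervalBox (-1) (m - 1))
    (hgr : ∀ x ∈ intervalBox (-1) (m - 1),
      IsGreatest {t : ℝ | (x, t) ∈ convexHull ℝ (latticeEmbed 1 '' (S : Set ((Fin 1 → ℤ) × ℤ)))} (f x))
    {x : ℝ} (hx : ee x ∈ intervalBox (-1) (m-1)) :
    ∃ (T : Finset ((Fin 1 → ℝ) × ℝ)) (w : ((Fin 1 → ℝ) × ℝ) → ℝ),
      (∀ q ∈ T, 0 ≤ w q) ∧ ∑ q ∈ T, w q = 1 ∧
      (∀ q ∈ T, ∃ ξ τ : ℤ, q.1 = ee (ξ:ℝ) ∧ q.2 = (τ:ℝ) ∧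
        ee (ξ:ℝ) ∈ intervalBox (-1) (m-1) ∧ (τ:ℝ) ≤ f (ee (ξ:ℝ))) ∧
      ∑ q ∈ T, w q * q.1 0 = x ∧ ∑ q ∈ T, w q * q.2 = f (ee x) := by
  classical
  have hset : latticeEmbed 1 '' (S : Set ((Fin 1 → ℤ) × ℤ))
      = ((S.image (latticeEmbed 1) : Finset ((Fin 1 → ℝ) × ℝ)) : Set ((Fin 1 → ℝ) × ℝ)) := by
    rw [Finset.coe_image]
  have hmem : (ee x, f (ee x)) ∈ convexHull ℝ (latticeEmbed 1 '' (S : Set ((Fin 1 → ℤ) × ℤ))) :=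
    (hgr _ hx).1
  rw [hset, Finset.convexHull_eq] at hmem
  obtain ⟨w, h0, h1, h2⟩ := hmem
  rw [Finset.centerMass_eq_of_sum_1 _ _ h1] at h2
  refine ⟨S.image (latticeEmbed 1), w, h0, h1, ?_, ?_, ?_⟩
  · intro q hq
    obtain ⟨a, _, rfl⟩ := Finset.mem_image.1 hq
    refine ⟨a.1 0, a.2, ?_, rfl, ?_, ?_⟩
    · funext i; rw [Subsingleton.elim i 0]; rfl
    · have hq' : latticeEmbed 1 a ∈ convexHull ℝ (latticeEmbed 1 '' (S : Set ((Fin 1 → ℤ) × ℤ))) := by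
        rw [hset]; exact subset_convexHull ℝ _ hq
      have h3 : (latticeEmbed 1 a).1 ∈ intervalBox (-1) (m-1) := by
        rw [← hproj]; exact ⟨_, hq', rfl⟩
      have : ee ((a.1 0 : ℤ) : ℝ) = (latticeEmbed 1 a).1 := by
        funext i; rw [Subsingleton.elim i 0]; rfl
      rwa [this]
    · have hq' : latticeEmbed 1 a ∈ convexHull ℝ (latticeEmbed 1 '' (S : Set ((Fin 1 → ℤ) × ℤ))) := by
        rw [hset]; exact subset_convexHull ℝ _ hq
      have h3 : (latticeEmbed 1 a).1 ∈ intervalBox (-1) (m-1) := by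
        rw [← hproj]; exact ⟨_, hq', rfl⟩
      have h4 := (hgr _ h3).2
      have h5 : ((latticeEmbed 1 a).1, (latticeEmbed 1 a).2) ∈
          convexHull ℝ (latticeEmbed 1 '' (S : Set ((Fin 1 → ℤ) × ℤ))) := by
        simpa using hq'
      have h6 := h4 h5
      have : ee ((a.1 0 : ℤ) : ℝ) = (latticeEmbed 1 a).1 := by
        funext i; rw [Subsingleton.elim i 0]; rfl
      rw [this]; exact h6
  · have := congrArg (fun v : (Fin 1 → ℝ) × ℝ => v.1 0) h2
    simpa [Prod.fst_sum, Finset.sum_apply, ee] using this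
  · have := congrArg (fun v : (Fin 1 → ℝ) × ℝ => v.2) h2
    simpa [Prod.snd_sum] using this


theorem combo_le (hproj : Prod.fst '' (convexHull ℝ (latticeEmbed 1 '' (S : Set ((Fin 1 → ℤ) × ℤ))))
      = intervalBox (-1) (m - 1))
    (hgr : ∀ x ∈ intervalBox (-1) (m - 1),
      IsGreatest {t : ℝ | (x, t) ∈ convexHull ℝ (latticeEmbed 1 '' (S : Set ((Fin 1 → ℤ) × ℤ)))} (f x))
    {x : ℝ} (hx : ee x ∈ intervalBox (-1) (m-1)) (r c : ℝ)
    (hline : ∀ ξ : ℤ, ee (ξ:ℝ) ∈ intervalBox (-1) (m-1) → f (ee (ξ:ℝ)) ≤ r * ξ + c) :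
    f (ee x) ≤ r * x + c := by
  obtain ⟨T, w, hw0, hw1, hq, hsx, hsf⟩ := rep hproj hgr hx
  have key : ∀ q ∈ T, w q * q.2 ≤ r * (w q * q.1 0) + c * w q := by
    intro q hqT
    obtain ⟨ξ, τ, hq1, hq2, hξI, hτf⟩ := hq q hqT
    have h1 : q.1 0 = (ξ:ℝ) := by rw [hq1]; rfl
    have h2 : q.2 ≤ r * q.1 0 + c := by
      rw [hq2, h1]; exact le_trans hτf (hline ξ hξI)
    have := mul_le_mul_of_nonneg_left h2 (hw0 q hqT)
    nlinarith [this]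
  calc f (ee x) = ∑ q ∈ T, w q * q.2 := hsf.symm
    _ ≤ ∑ q ∈ T, (r * (w q * q.1 0) + c * w q) := Finset.sum_le_sum key
    _ = r * (∑ q ∈ T, w q * q.1 0) + c * (∑ q ∈ T, w q) := by
        rw [Finset.sum_add_distrib, Finset.mul_sum, Finset.mul_sum]
    _ = r * x + c := by rw [hsx, hw1, mul_one]

theorem combo_eq (hproj : Prod.fst '' (convexHull ℝ (latticeEmbed 1 '' (S : Set ((Fin 1 → ℤ) × ℤ))))
      = intervalBox (-1) (m - 1))
    (hgr : ∀ x ∈ intervalBox (-1) (m - 1),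
      IsGreatest {t : ℝ | (x, t) ∈ convexHull ℝ (latticeEmbed 1 '' (S : Set ((Fin 1 → ℤ) × ℤ)))} (f x))
    {x : ℝ} (hx : ee x ∈ intervalBox (-1) (m-1)) (r c r' c' : ℝ)
    (hline : ∀ ξ : ℤ, ee (ξ:ℝ) ∈ intervalBox (-1) (m-1) → f (ee (ξ:ℝ)) ≤ r * ξ + c)
    (hline' : ∀ ξ : ℤ, ee (ξ:ℝ) ∈ intervalBox (-1) (m-1) → f (ee (ξ:ℝ)) ≤ r' * ξ + c')
    (he : f (ee x) = r * x + c) (he' : f (ee x) = r' * x + c') (hne : r ≠ r') :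
    ∃ z : ℤ, f (ee x) = (z:ℝ) := by
  obtain ⟨T, w, hw0, hw1, hq, hsx, hsf⟩ := rep hproj hgr hx
  have hgap : ∀ q ∈ T, ∀ (rr cc : ℝ),
      (∀ ξ : ℤ, ee (ξ:ℝ) ∈ intervalBox (-1) (m-1) → f (ee (ξ:ℝ)) ≤ rr * ξ + cc) →
      0 ≤ w q * ((rr * q.1 0 + cc) - q.2) := by
    intro q hqT rr cc hl
    obtain ⟨ξ, τ, hq1, hq2, hξI, hτf⟩ := hq q hqT
    have h1 : q.1 0 = (ξ:ℝ) := by rw [hq1]; rfl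
    have h2 : q.2 ≤ rr * q.1 0 + cc := by
      rw [hq2, h1]; exact le_trans hτf (hl ξ hξI)
    exact mul_nonneg (hw0 q hqT) (by linarith)
  have hzero : ∀ (rr cc : ℝ),
      (∀ ξ : ℤ, ee (ξ:ℝ) ∈ intervalBox (-1) (m-1) → f (ee (ξ:ℝ)) ≤ rr * ξ + cc) →
      f (ee x) = rr * x + cc →
      ∀ q ∈ T, w q * ((rr * q.1 0 + cc) - q.2) = 0 := by
    intro rr cc hl heq
    have hs : ∑ q ∈ T, w q * ((rr * q.1 0 + cc) - q.2) = 0 := by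
      have expand : ∀ q ∈ T, w q * ((rr * q.1 0 + cc) - q.2)
          = rr * (w q * q.1 0) + cc * w q - w q * q.2 := by intro q _; ring
      rw [Finset.sum_congr rfl expand, Finset.sum_sub_distrib, Finset.sum_add_distrib,
        ← Finset.mul_sum, ← Finset.mul_sum, hsx, hw1, hsf, mul_one]
      linarith
    exact (Finset.sum_eq_zero_iff_of_nonneg (fun q hq' => hgap q hq' rr cc hl)).1 hs
  obtain ⟨q0, hq0T, hq0w⟩ := Finset.exists_ne_zero_of_sum_ne_zero (by rw [hw1]; norm_num : ∑ q ∈ T, w q ≠ 0)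
  have e1 := hzero r c hline he q0 hq0T
  have e2 := hzero r' c' hline' he' q0 hq0T
  obtain ⟨ξ, τ, hq1, hq2, hξI, hτf⟩ := hq q0 hq0T
  have h1 : q0.1 0 = (ξ:ℝ) := by rw [hq1]; rfl
  rw [mul_eq_zero] at e1 e2
  have g1 : r * q0.1 0 + c = q0.2 := by rcases e1 with h | h; exact absurd h hq0w; linarith
  have g2 : r' * q0.1 0 + c' = q0.2 := by rcases e2 with h | h; exact absurd h hq0w; linarith
  have hxx : (ξ:ℝ) = x := by
    by_contra hcon
    apply hne
    have d1 : r * ((ξ:ℝ) - x) = q0.2 - f (ee x) := by rw [h1] at g1; linarith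
    have d2 : r' * ((ξ:ℝ) - x) = q0.2 - f (ee x) := by rw [h1] at g2; linarith
    have : ((ξ:ℝ) - x) ≠ 0 := sub_ne_zero.2 hcon
    field_simp at d1 d2
    have := d1.trans d2.symm
    exact mul_right_cancel₀ ‹((ξ:ℝ) - x) ≠ 0› (this.trans (mul_comm _ _))
  refine ⟨τ, ?_⟩
  rw [he, ← hxx, ← h1, g1, hq2]

theorem conc (hproj : Prod.fst '' (convexHull ℝ (latticeEmbed 1 '' (S : Set ((Fin 1 → ℤ) × ℤ))))
      = intervalBox (-1) (m - 1))
    (hgr : ∀ x ∈ intervalBox (-1) (m - 1),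
      IsGreatest {t : ℝ | (x, t) ∈ convexHull ℝ (latticeEmbed 1 '' (S : Set ((Fin 1 → ℤ) × ℤ)))} (f x))
    {x y : ℝ} (hx : ee x ∈ intervalBox (-1) (m-1)) (hy : ee y ∈ intervalBox (-1) (m-1))
    {a b : ℝ} (ha : 0 ≤ a) (hb : 0 ≤ b) (hab : a + b = 1) :
    a * f (ee x) + b * f (ee y) ≤ f (ee (a*x + b*y)) := by
  set TC := convexHull ℝ (latticeEmbed 1 '' (S : Set ((Fin 1 → ℤ) × ℤ))) with hTC
  have hpx : (ee x, f (ee x)) ∈ TC := (hgr _ hx).1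
  have hpy : (ee y, f (ee y)) ∈ TC := (hgr _ hy).1
  have hz : a • (ee x, f (ee x)) + b • (ee y, f (ee y)) ∈ TC :=
    (convex_convexHull ℝ _) hpx hpy ha hb hab
  have hzeq : a • (ee x, f (ee x)) + b • (ee y, f (ee y))
      = (ee (a*x + b*y), a * f (ee x) + b * f (ee y)) := by
    apply Prod.ext
    · show a • ee x + b • ee y = ee (a*x+b*y)
      funext i; simp [ee]
    · rfl
  rw [hzeq] at hz
  have hz1 : ee (a*x+b*y) ∈ intervalBox (-1) (m-1) := by
    rw [← hproj]; exact ⟨_, hz, rfl⟩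
  exact (hgr _ hz1).2 hz

theorem conc3 (hproj : Prod.fst '' (convexHull ℝ (latticeEmbed 1 '' (S : Set ((Fin 1 → ℤ) × ℤ))))
      = intervalBox (-1) (m - 1))
    (hgr : ∀ x ∈ intervalBox (-1) (m - 1),
      IsGreatest {t : ℝ | (x, t) ∈ convexHull ℝ (latticeEmbed 1 '' (S : Set ((Fin 1 → ℤ) × ℤ)))} (f x))
    {x y z : ℝ} (hx : ee x ∈ intervalBox (-1) (m-1)) (hz : ee z ∈ intervalBox (-1) (m-1))
    (hxy : x < y) (hyz : y < z) :
    f (ee x) * (z - y) + f (ee z) * (y - x) ≤ f (ee y) * (z - x) := by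
  have hzx : (0:ℝ) < z - x := by linarith
  set a := (z - y)/(z - x) with ha'
  set b := (y - x)/(z - x) with hb'
  have ha : 0 ≤ a := div_nonneg (by linarith) (by linarith)
  have hb : 0 ≤ b := div_nonneg (by linarith) (by linarith)
  have hne : z - x ≠ 0 := ne_of_gt hzx
  have hab : a + b = 1 := by rw [ha', hb']; field_simp; ring
  have hcomb : a*x + b*z = y := by rw [ha', hb']; field_simp; ring
  have hmain := conc hproj hgr hx hz ha hb hab
  rw [hcomb] at hmain
  have h2 : (a * f (ee x) + b * f (ee z)) * (z - x) ≤ f (ee y) * (z - x) :=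
    mul_le_mul_of_nonneg_right hmain (le_of_lt hzx)
  have e1 : a * (z - x) = z - y := div_mul_cancel₀ _ hne
  have e2 : b * (z - x) = y - x := div_mul_cancel₀ _ hne
  calc f (ee x) * (z - y) + f (ee z) * (y - x)
      = (a * f (ee x) + b * f (ee z)) * (z - x) := by rw [← e1, ← e2]; ring
    _ ≤ f (ee y) * (z - x) := h2

theorem unit_affine (hproj : Prod.fst '' (convexHull ℝ (latticeEmbed 1 '' (S : Set ((Fin 1 → ℤ) × ℤ))))
      = intervalBox (-1) (m - 1))
    (hgr : ∀ x ∈ intervalBox (-1) (m - 1),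
      IsGreatest {t : ℝ | (x, t) ∈ convexHull ℝ (latticeEmbed 1 '' (S : Set ((Fin 1 → ℤ) × ℤ)))} (f x))
    {j : ℤ} (hj1 : -1 ≤ j) (hj2 : j + 1 ≤ m - 1)
    {y : ℝ} (hy1 : (j:ℝ) ≤ y) (hy2 : y ≤ (j:ℝ) + 1) :
    f (ee y) = f (ee (j:ℝ)) + (y - j) * (f (ee ((j:ℝ)+1)) - f (ee (j:ℝ))) := by
  have hj1R : (-1:ℝ) ≤ (j:ℝ) := by exact_mod_cast hj1
  have hj2R : (j:ℝ) + 1 ≤ (m:ℝ) - 1 := by exact_mod_cast hj2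
  have hmj : ee (j:ℝ) ∈ intervalBox (-1) (m-1) := by
    rw [mem_ibox]; exact ⟨hj1R, by linarith⟩
  have hmj1 : ee ((j:ℝ)+1) ∈ intervalBox (-1) (m-1) := by
    rw [mem_ibox]; exact ⟨by linarith, by linarith⟩
  have hmy : ee y ∈ intervalBox (-1) (m-1) := by
    rw [mem_ibox]; exact ⟨by linarith, by linarith⟩
  set Fj := f (ee (j:ℝ)) with hFj
  set Fj1 := f (ee ((j:ℝ)+1)) with hFj1
  set r := Fj1 - Fj with hr
  set c := Fj - j * r with hc
  have hub : f (ee y) ≤ r * y + c := by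
    apply combo_le hproj hgr hmy
    intro ξ hξ
    have hξI := mem_ibox.1 hξ
    rcases lt_trichotomy ξ j with hlt | heq | hgt
    · have hltR : (ξ:ℝ) < j := by exact_mod_cast hlt
      have h3 := conc3 hproj hgr hξ hmj1 hltR (by linarith : (j:ℝ) < (j:ℝ)+1)
      have expand : ((j:ℝ)+1) - (j:ℝ) = 1 := by ring
      nlinarith [h3]
    · subst heq
      have : r * (ξ:ℝ) + c = Fj := by rw [hc]; ring
      rw [this]
    · rcases eq_or_lt_of_le (by omega : j + 1 ≤ ξ) with heq1 | hgt1
      · have : (ξ:ℝ) = (j:ℝ) + 1 := by exact_mod_cast heq1.symm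
        rw [this]
        have : r * ((j:ℝ)+1) + c = Fj1 := by rw [hc, hr]; ring
        rw [this]
      · have hgtR : (j:ℝ) + 1 < (ξ:ℝ) := by exact_mod_cast hgt1
        have h3 := conc3 hproj hgr hmj hξ (by linarith : (j:ℝ) < (j:ℝ)+1) hgtR
        nlinarith [h3]
  have hlb : Fj + (y - j) * r ≤ f (ee y) := by
    have ha : (0:ℝ) ≤ (j:ℝ) + 1 - y := by linarith
    have hb : (0:ℝ) ≤ y - j := by linarith
    have hab : ((j:ℝ) + 1 - y) + (y - j) = 1 := by ring
    have := conc hproj hgr hmj hmj1 ha hb hab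
    have hcomb : ((j:ℝ)+1-y) * (j:ℝ) + (y - j) * ((j:ℝ)+1) = y := by ring
    rw [hcomb] at this
    nlinarith [this]
  have : r * y + c = Fj + (y - j) * r := by rw [hc]; ring
  rw [this] at hub
  linarith [hub, hlb]

theorem line_eq_of_ge (hproj : Prod.fst '' (convexHull ℝ (latticeEmbed 1 '' (S : Set ((Fin 1 → ℤ) × ℤ))))
      = intervalBox (-1) (m - 1))
    (hgr : ∀ x ∈ intervalBox (-1) (m - 1),
      IsGreatest {t : ℝ | (x, t) ∈ convexHull ℝ (latticeEmbed 1 '' (S : Set ((Fin 1 → ℤ) × ℤ)))} (f x))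
    {x : ℝ} (hx1 : -1 < x) (hx2 : x < (m:ℝ) - 1) (r c : ℝ)
    (hle : ∀ y : ℝ, ee y ∈ intervalBox (-1) (m-1) → r * y + c ≤ f (ee y))
    (heq : f (ee x) = r * x + c) :
    ∀ y : ℝ, ee y ∈ intervalBox (-1) (m-1) → f (ee y) = r * y + c := by
  have hxB : ee x ∈ intervalBox (-1) (m-1) := mem_ibox.2 ⟨le_of_lt hx1, le_of_lt hx2⟩
  intro y hy
  have hyI := mem_ibox.1 hy
  rcases lt_trichotomy y x with hlt | heqq | hgt
  · set z : ℝ := (m:ℝ) - 1 with hz'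
    have hzB : ee z ∈ intervalBox (-1) (m-1) := mem_ibox.2 ⟨by linarith [hyI.1], le_refl _⟩
    have hzy : (0:ℝ) < z - y := by linarith
    set a := (z - x)/(z - y) with ha'
    set b := (x - y)/(z - y) with hb'
    have ha : 0 < a := div_pos (by linarith) hzy
    have hb : 0 < b := div_pos (by linarith) hzy
    have hne : z - y ≠ 0 := ne_of_gt hzy
    have hab : a + b = 1 := by rw [ha', hb']; field_simp; ring
    have hcomb : a*y + b*z = x := by rw [ha', hb']; field_simp; ring
    have h1 := conc hproj hgr hy hzB (le_of_lt ha) (le_of_lt hb) hab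
    rw [hcomb, heq] at h1
    have h2 := hle y hy
    have h3 := hle z hzB
    have h4 : a * (r*y+c) + b * (r*z+c) = r * x + c :=
      by linear_combination r * hcomb + c * hab
    have hbz : b*(r*z+c) ≤ b*f (ee z) := mul_le_mul_of_nonneg_left h3 hb.le
    have ha2 : a*f (ee y) ≤ a*(r*y+c) := by linarith
    have ha3 : a*(r*y+c) ≤ a*f (ee y) := mul_le_mul_of_nonneg_left h2 ha.le
    exact mul_left_cancel₀ (ne_of_gt ha) (le_antisymm ha2 ha3)
  · rw [heqq, heq]
  · set z : ℝ := -1 with hz'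
    have hzB : ee z ∈ intervalBox (-1) (m-1) := mem_ibox.2 ⟨le_refl _, by linarith [hyI.2]⟩
    have hzy : (0:ℝ) < y - z := by linarith
    set a := (x - z)/(y - z) with ha'
    set b := (y - x)/(y - z) with hb'
    have ha : 0 < a := div_pos (by linarith) hzy
    have hb : 0 < b := div_pos (by linarith) hzy
    have hne : y - z ≠ 0 := ne_of_gt hzy
    have hab : a + b = 1 := by rw [ha', hb', ← add_div, div_eq_one_iff_eq hne]; ring
    have hcomb : a*y + b*z = x := by rw [ha', hb']; field_simp; ring
    have h1 := conc hproj hgr hy hzB (le_of_lt ha) (le_of_lt hb) hab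
    rw [hcomb, heq] at h1
    have h2 := hle y hy
    have h3 := hle z hzB
    have h4 : a * (r*y+c) + b * (r*z+c) = r * x + c :=
      by linear_combination r * hcomb + c * hab
    have hbz : b*(r*z+c) ≤ b*f (ee z) := mul_le_mul_of_nonneg_left h3 hb.le
    have ha2 : a*f (ee y) ≤ a*(r*y+c) := by linarith
    have ha3 : a*(r*y+c) ≤ a*f (ee y) := mul_le_mul_of_nonneg_left h2 ha.le
    exact mul_left_cancel₀ (ne_of_gt ha) (le_antisymm ha2 ha3)

theorem supportLine (hm : 2 < m)
    (hproj : Prod.fst '' (convexHull ℝ (latticeEmbed 1 '' (S : Set ((Fin 1 → ℤ) × ℤ))))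
      = intervalBox (-1) (m - 1))
    (hgr : ∀ x ∈ intervalBox (-1) (m - 1),
      IsGreatest {t : ℝ | (x, t) ∈ convexHull ℝ (latticeEmbed 1 '' (S : Set ((Fin 1 → ℤ) × ℤ)))} (f x))
    (hhone : AtHeightOne 1 (intervalBox (-1) (m-1)) f) (hf0 : 0 < f 0)
    {x c d r₀ : ℝ} (hc : ee c ∈ intervalBox (-1) (m-1)) (hd : ee d ∈ intervalBox (-1) (m-1))
    (hcx : c < x) (hxd : x < d)
    (haff : ∀ y : ℝ, c ≤ y → y ≤ d → f (ee y) = f (ee x) + r₀ * (y - x)) :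
    ∃ K P : ℤ, 1 ≤ K ∧ (∀ y : ℝ, ee y ∈ intervalBox (-1) (m-1) → (K:ℝ) * f (ee y) ≤ P * y + 1) ∧
      (∀ y : ℝ, c ≤ y → y ≤ d → (K:ℝ) * f (ee y) = P * y + 1) := by
  have hcI := mem_ibox.1 hc
  have hdI := mem_ibox.1 hd
  have hxB : ee x ∈ intervalBox (-1) (m-1) := mem_ibox.2 ⟨by linarith [hcI.1], by linarith [hdI.2]⟩
  have h0B : ee 0 ∈ intervalBox (-1) (m-1) := by
    rw [mem_ibox]
    refine ⟨by norm_num, ?_⟩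
    have : (2:ℝ) < (m:ℝ) := by exact_mod_cast hm
    linarith
  have hf0' : 0 < f (ee 0) := by rw [ee_zero]; exact hf0
  obtain ⟨u, mu, habs, hsup⟩ := hhone (ee x) hxB
  rw [dotZ_ee] at habs
  have hsup' : ∀ y : ℝ, ee y ∈ intervalBox (-1) (m-1) →
      y * (u 0 : ℝ) + (mu:ℝ) * f (ee y) ≤ x * (u 0 : ℝ) + (mu:ℝ) * f (ee x) := by
    intro y hy
    have := hsup (ee y) hy
    rwa [dotZ_ee, dotZ_ee] at this
  set U : ℝ := (u 0 : ℝ) with hU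
  set MU : ℝ := (mu : ℝ) with hMU
  set ε : ℝ := x * U + MU * f (ee x) with hε
  have habs' : ε = 1 ∨ ε = -1 := (abs_eq (by norm_num : (0:ℝ) ≤ 1)).1 habs
  have hκ : U + MU * r₀ = 0 := by
    rcases lt_trichotomy (U + MU * r₀) 0 with hneg | hzero | hpos
    · exfalso
      have h1 := hsup' c hc
      have h2 : f (ee c) = f (ee x) + r₀ * (c - x) := haff c (le_refl c) (by linarith)
      have h2m : MU * f (ee c) = MU * (f (ee x) + r₀ * (c - x)) := by rw [h2]
      nlinarith [h1, h2m, hε, mul_pos (by linarith : (0:ℝ) < -(U + MU * r₀)) (by linarith : (0:ℝ) < x - c)]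
    · exact hzero
    · exfalso
      have h1 := hsup' d hd
      have h2 : f (ee d) = f (ee x) + r₀ * (d - x) := haff d (by linarith) (le_refl d)
      have h2m : MU * f (ee d) = MU * (f (ee x) + r₀ * (d - x)) := by rw [h2]
      nlinarith [h1, h2m, hε, mul_pos hpos (by linarith : (0:ℝ) < d - x)]
  have hMU0 : MU ≠ 0 := by
    intro h0
    have hU0 : U = 0 := by rw [h0] at hκ; linarith
    rw [hU0, h0] at hε
    simp at hε
    rcases habs' with h | h <;> rw [hε] at h <;> norm_num at h
  rcases lt_trichotomy mu 0 with hmuneg | hmu0 | hmupos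
  · -- support from below ⇒ affine
    have hMUneg : MU < 0 := by rw [hMU]; exact_mod_cast hmuneg
    have hUe : U = -(MU * r₀) := by linarith
    have hle : ∀ y : ℝ, ee y ∈ intervalBox (-1) (m-1) →
        r₀ * y + (f (ee x) - r₀ * x) ≤ f (ee y) := by
      intro y hy
      have h1 := hsup' y hy
      rw [hUe] at h1
      have hε2 : ε = x * (-(MU*r₀)) + MU * f (ee x) := by rw [hε, hUe]
      have e1 : MU * (f (ee y) - (f (ee x) + r₀*(y-x))) ≤ 0 := by
        nlinarith [h1, hε2]
      have e2 : 0 ≤ f (ee y) - (f (ee x) + r₀*(y-x)) := by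
        by_contra hcon
        push_neg at hcon
        nlinarith [mul_pos_of_neg_of_neg hMUneg (by linarith : f (ee y) - (f (ee x) + r₀*(y-x)) < 0)]
      linarith
    have heqx : f (ee x) = r₀ * x + (f (ee x) - r₀ * x) := by ring
    have hall := line_eq_of_ge hproj hgr (by linarith [hcI.1] : -1 < x)
      (by linarith [hdI.2] : x < (m:ℝ)-1) r₀ (f (ee x) - r₀ * x) hle heqx
    have key : ∀ y : ℝ, ee y ∈ intervalBox (-1) (m-1) → (-MU) * f (ee y) = U * y - ε := by
      intro y hy
      rw [hall y hy, hε]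
      linear_combination (x - y) * hκ
    have hε' : ε = -1 := by
      rcases habs' with h1 | h1
      · exfalso
        have h6 := key 0 h0B
        rw [h1] at h6
        nlinarith [mul_pos (by linarith : (0:ℝ) < -MU) hf0', h6]
      · exact h1
    refine ⟨-mu, u 0, by omega, ?_, ?_⟩
    · intro y hy
      have h5 := key y hy
      rw [hε'] at h5
      push_cast
      rw [← hU, ← hMU]
      linarith [h5]
    · intro y hy1 hy2
      have hyB : ee y ∈ intervalBox (-1) (m-1) :=
        mem_ibox.2 ⟨by linarith [hcI.1], by linarith [hdI.2]⟩
      have h5 := key y hyB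
      rw [hε'] at h5
      push_cast
      rw [← hU, ← hMU]
      linarith [h5]
  · exfalso
    apply hMU0
    rw [hMU]
    exact_mod_cast hmu0
  · have hMUpos : (0:ℝ) < MU := by rw [hMU]; exact_mod_cast hmupos
    have hEps : ε = 1 := by
      rcases habs' with h1 | h1
      · exact h1
      · exfalso
        have h2 := hsup' 0 h0B
        rw [h1] at h2
        nlinarith [mul_pos hMUpos hf0', h2]
    have hε' : x * U + MU * f (ee x) = 1 := by rw [← hε]; exact hEps
    refine ⟨mu, -(u 0), by omega, ?_, ?_⟩
    · intro y hy
      have h1 := hsup' y hy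
      rw [hEps] at h1
      push_cast
      rw [← hU, ← hMU]
      linarith [h1]
    · intro y hy1 hy2
      have h2 : f (ee y) = f (ee x) + r₀ * (y - x) := haff y hy1 hy2
      push_cast
      rw [← hU, ← hMU]
      rw [h2]
      linear_combination (y - x) * hκ + hε'

set_option maxHeartbeats 1000000 in
theorem profile (hm : 2 < m)
    (hproj : Prod.fst '' (convexHull ℝ (latticeEmbed 1 '' (S : Set ((Fin 1 → ℤ) × ℤ))))
      = intervalBox (-1) (m - 1))
    (hgr : ∀ x ∈ intervalBox (-1) (m - 1),
      IsGreatest {t : ℝ | (x, t) ∈ convexHull ℝ (latticeEmbed 1 '' (S : Set ((Fin 1 → ℤ) × ℤ)))} (f x))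
    (hhone : AtHeightOne 1 (intervalBox (-1) (m-1)) f) (hf0 : 0 < f 0)
    (hnaff : ¬ IsIntegralAffineOn 1 (intervalBox (-1) (m-1)) f) :
    ∃ A K P : ℤ, 1 ≤ K ∧ f (ee ((m:ℝ)-1)) = (A:ℝ) ∧ K * A = P*(m-1)+1 ∧
      (∀ y : ℝ, ee y ∈ intervalBox (-1) (m-1) → (K:ℝ) * f (ee y) ≤ (P:ℝ)*y + 1) ∧
      (∀ y : ℝ, (m:ℝ)-2 ≤ y → y ≤ (m:ℝ)-1 → (K:ℝ) * f (ee y) = (P:ℝ)*y + 1) ∧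
      (K = 1 ∨ (2 ≤ K ∧ K ∣ m)) := by
  have hmR : (2:ℝ) < (m:ℝ) := by exact_mod_cast hm
  -- cast identities
  have cm1 : ((m-1 : ℤ):ℝ) = (m:ℝ)-1 := by push_cast; ring
  have cm2 : ((m-2 : ℤ):ℝ) = (m:ℝ)-2 := by push_cast; ring
  have cm2' : ((m-2 : ℤ):ℝ) + 1 = (m:ℝ)-1 := by push_cast; ring
  -- memberships
  have hB1 : ee ((m:ℝ)-1) ∈ intervalBox (-1) (m-1) := by
    rw [mem_ibox]; exact ⟨by linarith, le_refl _⟩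
  have hB2 : ee ((m:ℝ)-2) ∈ intervalBox (-1) (m-1) := by
    rw [mem_ibox]; exact ⟨by linarith, by linarith⟩
  have hBm1 : ee (-1:ℝ) ∈ intervalBox (-1) (m-1) := by
    rw [mem_ibox]; exact ⟨le_refl _, by linarith⟩
  have hB0 : ee (0:ℝ) ∈ intervalBox (-1) (m-1) := by
    rw [mem_ibox]; exact ⟨by norm_num, by linarith⟩
  -- the slope of the last unit interval, rewritten
  have hrho2 : rho f (m-2) = f (ee ((m:ℝ)-1)) - f (ee ((m:ℝ)-2)) := by
    unfold rho; rw [cm2', cm2]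
  have hrhom1 : rho f (-1) = f (ee (0:ℝ)) - f (ee (-1:ℝ)) := by
    unfold rho; norm_num
  -- affineness on the last unit interval
  have hUAlast : ∀ y : ℝ, (m:ℝ)-2 ≤ y → y ≤ (m:ℝ)-1 →
      f (ee y) = f (ee ((m:ℝ)-2)) + (y - ((m:ℝ)-2)) * rho f (m-2) := by
    intro y h1 h2
    have := unit_affine hproj hgr (j := m-2) (by omega) (by omega)
      (y := y) (by rw [cm2]; exact h1) (by rw [cm2]; linarith)
    rw [hrho2]
    rw [cm2', cm2] at this
    linarith [this]
  -- slope monotonicity (adjacent)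
  have hmono : ∀ j : ℤ, 0 ≤ j → j ≤ m-2 → rho f j ≤ rho f (j-1) := by
    intro j h0 h2
    have hx : ee ((j-1 : ℤ):ℝ) ∈ intervalBox (-1) (m-1) := intB (by omega) (by omega)
    have hz : ee ((j+1 : ℤ):ℝ) ∈ intervalBox (-1) (m-1) := intB (by omega) (by omega)
    have c1 : ((j-1 : ℤ):ℝ) = (j:ℝ)-1 := by push_cast; ring
    have c2 : ((j+1 : ℤ):ℝ) = (j:ℝ)+1 := by push_cast; ring
    rw [c1] at hx; rw [c2] at hz
    have h3 := conc3 hproj hgr hx hz (by linarith : (j:ℝ)-1 < (j:ℝ)) (by linarith : (j:ℝ) < (j:ℝ)+1)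
    unfold rho
    have c4 : ((j-1 : ℤ):ℝ)+1 = (j:ℝ) := by push_cast; ring
    rw [c4, c1]
    linarith [h3]
  -- integrality at the right endpoint
  have hAint : ∃ A : ℤ, f (ee ((m:ℝ)-1)) = (A:ℝ) := by
    have hline1 : ∀ ξ : ℤ, ee (ξ:ℝ) ∈ intervalBox (-1) (m-1) →
        f (ee (ξ:ℝ)) ≤ (f (ee ((m:ℝ)-1)) - f (ee ((m:ℝ)-2))) * ξ +
          (f (ee ((m:ℝ)-1)) - (f (ee ((m:ℝ)-1)) - f (ee ((m:ℝ)-2))) * ((m:ℝ)-1)) := by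
      intro ξ hξ
      have hξI := mem_ibox.1 hξ
      have hξle : ξ ≤ m - 1 := by
        have h5 : (ξ:ℝ) ≤ ((m-1:ℤ):ℝ) := by rw [cm1]; exact hξI.2
        exact_mod_cast h5
      rcases lt_trichotomy ξ (m-2) with hlt | heqx | hgt
      · have hltR : (ξ:ℝ) < (m:ℝ)-2 := by
          have h6 : (ξ:ℝ) < ((m-2:ℤ):ℝ) := by exact_mod_cast hlt
          rwa [cm2] at h6
        have h3 := conc3 hproj hgr hξ hB1 hltR (by linarith : (m:ℝ)-2 < (m:ℝ)-1)
        nlinarith [h3]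
      · rw [heqx, cm2]
        apply le_of_eq
        ring
      · have hx9 : ξ = m-1 := by omega
        rw [hx9, cm1]
        apply le_of_eq
        ring
    have hline2 : ∀ ξ : ℤ, ee (ξ:ℝ) ∈ intervalBox (-1) (m-1) →
        f (ee (ξ:ℝ)) ≤ ((f (ee ((m:ℝ)-1)) - f (ee ((m:ℝ)-2))) - 1) * ξ +
          (f (ee ((m:ℝ)-1)) - ((f (ee ((m:ℝ)-1)) - f (ee ((m:ℝ)-2))) - 1) * ((m:ℝ)-1)) := by
      intro ξ hξ
      have hξI := mem_ibox.1 hξ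
      have h1 := hline1 ξ hξ
      have h2 : (ξ:ℝ) ≤ (m:ℝ)-1 := hξI.2
      nlinarith [h1, h2]
    exact combo_eq hproj hgr hB1 _ _ _ _ hline1 hline2 (by ring) (by ring)
      (by intro h; linarith [h])
  have hBint : ∃ B : ℤ, f (ee (-1:ℝ)) = (B:ℝ) := by
    have hline1 : ∀ ξ : ℤ, ee (ξ:ℝ) ∈ intervalBox (-1) (m-1) →
        f (ee (ξ:ℝ)) ≤ (f (ee (0:ℝ)) - f (ee (-1:ℝ))) * ξ +
          (f (ee (-1:ℝ)) + (f (ee (0:ℝ)) - f (ee (-1:ℝ)))) := by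
      intro ξ hξ
      have hξI := mem_ibox.1 hξ
      have hξge : -1 ≤ ξ := by exact_mod_cast hξI.1
      rcases lt_trichotomy 0 ξ with hgt | heqx | hlt
      · have hgtR : (0:ℝ) < (ξ:ℝ) := by exact_mod_cast hgt
        have h3 := conc3 hproj hgr hBm1 hξ (by norm_num : (-1:ℝ) < 0) hgtR
        nlinarith [h3]
      · rw [← heqx]
        apply le_of_eq
        push_cast
        ring
      · have hx9 : ξ = -1 := by omega
        rw [hx9]
        apply le_of_eq
        push_cast
        ring
    have hline2 : ∀ ξ : ℤ, ee (ξ:ℝ) ∈ intervalBox (-1) (m-1) →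
        f (ee (ξ:ℝ)) ≤ ((f (ee (0:ℝ)) - f (ee (-1:ℝ))) + 1) * ξ +
          (f (ee (-1:ℝ)) + ((f (ee (0:ℝ)) - f (ee (-1:ℝ))) + 1)) := by
      intro ξ hξ
      have hξI := mem_ibox.1 hξ
      have h1 := hline1 ξ hξ
      have h2 : (-1:ℝ) ≤ (ξ:ℝ) := hξI.1
      nlinarith [h1, h2]
    exact combo_eq hproj hgr hBm1 _ _ _ _ hline1 hline2 (by ring) (by ring)
      (by intro h; linarith [h])
  obtain ⟨A, hA⟩ := hAint
  obtain ⟨B, hB⟩ := hBint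
  -- support line on the last unit interval
  have haffmid : ∀ y : ℝ, (m:ℝ)-2 ≤ y → y ≤ (m:ℝ)-1 →
      f (ee y) = f (ee ((m:ℝ)-3/2)) + (rho f (m-2)) * (y - ((m:ℝ)-3/2)) := by
    intro y h1 h2
    have e1 := hUAlast y h1 h2
    have e2 := hUAlast ((m:ℝ)-3/2) (by linarith) (by linarith)
    linear_combination e1 - e2
  obtain ⟨K, P, hK1, hub, heq⟩ := supportLine hm hproj hgr hhone hf0 (x := (m:ℝ) - 3/2)
    (r₀ := rho f (m-2)) hB2 hB1 (by linarith) (by linarith) haffmid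
  have hKpos : (0:ℝ) < (K:ℝ) := by exact_mod_cast hK1
  -- K * rho(m-2) = P
  have hKrho : (K:ℝ) * rho f (m-2) = (P:ℝ) := by
    have e1 := heq ((m:ℝ)-2) (le_refl _) (by linarith)
    have e2 := heq ((m:ℝ)-1) (by linarith) (le_refl _)
    rw [hrho2]
    linear_combination e2 - e1
  -- value equation at the right endpoint
  have hKA : K * A = P*(m-1)+1 := by
    have e2 := heq ((m:ℝ)-1) (by linarith) (le_refl _)
    rw [hA] at e2
    have : ((K * A : ℤ):ℝ) = ((P*(m-1)+1 : ℤ):ℝ) := by push_cast; linarith [e2]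
    exact_mod_cast this
  -- main case split: is there a breakpoint?
  -- if K = 1 we are done immediately
  by_cases hK1' : K = 1
  · exact ⟨A, K, P, hK1, hA, hKA, hub, heq, Or.inl hK1'⟩
  have hK2 : 2 ≤ K := by omega
  have hKrho' : ∀ j : ℤ, -1 ≤ j → j ≤ m-2 → rho f j = rho f (m-2) →
      (K:ℝ) * rho f j = (P:ℝ) := by
    intro j _ _ hj
    rw [hj]; exact hKrho
  have hend : (K:ℝ) * f (ee ((m-1 : ℤ):ℝ)) = (P:ℝ)*((m-1:ℤ):ℝ) + 1 := by
    rw [cm1]; exact heq ((m:ℝ)-1) (by linarith) (le_refl _)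
  -- generic kink integrality
  have kink : ∀ (x0 : ℝ), ee x0 ∈ intervalBox (-1) (m-1) → ∀ K1 P1 L1 Q1 : ℤ, 1 ≤ K1 → 1 ≤ L1 →
      (∀ y : ℝ, ee y ∈ intervalBox (-1) (m-1) → (K1:ℝ)*f (ee y) ≤ (P1:ℝ)*y+1) →
      (K1:ℝ)*f (ee x0) = (P1:ℝ)*x0+1 →
      (∀ y : ℝ, ee y ∈ intervalBox (-1) (m-1) → (L1:ℝ)*f (ee y) ≤ (Q1:ℝ)*y+1) →
      (L1:ℝ)*f (ee x0) = (Q1:ℝ)*x0+1 →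
      (P1:ℝ)*(L1:ℝ) ≠ (Q1:ℝ)*(K1:ℝ) → ∃ v : ℤ, f (ee x0) = (v:ℝ) := by
    intro x0 hx0 K1 P1 L1 Q1 hK11 hL11 hub1 he1 hub2 he2 hnePL
    have hKR : (0:ℝ) < (K1:ℝ) := by exact_mod_cast hK11
    have hLR : (0:ℝ) < (L1:ℝ) := by exact_mod_cast hL11
    apply combo_eq hproj hgr hx0 ((P1:ℝ)/K1) (1/K1) ((Q1:ℝ)/L1) (1/L1)
    · intro ξ hξ
      rw [div_mul_eq_mul_div, ← add_div, le_div_iff₀ hKR]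
      linarith [hub1 ξ hξ]
    · intro ξ hξ
      rw [div_mul_eq_mul_div, ← add_div, le_div_iff₀ hLR]
      linarith [hub2 ξ hξ]
    · rw [div_mul_eq_mul_div, ← add_div, eq_div_iff (ne_of_gt hKR)]
      linarith [he1]
    · rw [div_mul_eq_mul_div, ← add_div, eq_div_iff (ne_of_gt hLR)]
      linarith [he2]
    · intro h
      rw [div_eq_div_iff (ne_of_gt hKR) (ne_of_gt hLR)] at h
      exact hnePL h
  by_cases hnob : ∀ j : ℤ, 0 ≤ j → j ≤ m-2 → rho f (j-1) = rho f j
  · -- no breakpoints: f is affine on the whole box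
    have hchain : ∀ j : ℤ, -1 ≤ j → j ≤ m-2 → rho f j = rho f (m-2) :=
      rho_chain (-1) (m-2) (fun j h1 h2 => hnob j (by omega) h2)
    have hvals : ∀ j : ℤ, -1 ≤ j → j ≤ m-1 → (K:ℝ) * f (ee (j:ℝ)) = (P:ℝ)*(j:ℝ) + 1 :=
      chain_vals (-1) (m-1) K P
        (fun j h1 h2 => hKrho' j h1 (by omega) (hchain j h1 (by omega))) hend
    have hlin : ∀ y : ℝ, ee y ∈ intervalBox (-1) (m-1) → (K:ℝ) * f (ee y) = (P:ℝ)*y + 1 := by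
      intro y hy
      have hyI := mem_ibox.1 hy
      by_cases hy2 : y < (m:ℝ)-1
      · set j : ℤ := ⌊y⌋ with hj
        have hj1 : -1 ≤ j := by
          rw [hj]
          apply Int.le_floor.2
          push_cast
          exact hyI.1
        have hj2 : j ≤ m-2 := by
          have : j < m-1 := by
            rw [hj]
            apply Int.floor_lt.2
            rw [cm1]
            exact hy2
          omega
        have hy1 : (j:ℝ) ≤ y := Int.floor_le y
        have hy4 : y ≤ (j:ℝ)+1 := (Int.lt_floor_add_one y).le
        have hUA := unit_affine hproj hgr hj1 (by omega) hy1 hy4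
        have h5 := hvals j hj1 (by omega)
        have h6 : (K:ℝ) * rho f j = (P:ℝ) := hKrho' j hj1 hj2 (hchain j hj1 hj2)
        unfold rho at h6
        linear_combination (K:ℝ) * hUA + h5 + (y - (j:ℝ)) * h6
      · have hyy : y = (m:ℝ)-1 := le_antisymm hyI.2 (not_lt.1 hy2)
        rw [hyy]
        exact heq ((m:ℝ)-1) (by linarith) (le_refl _)
    -- K = 1 would make f integral affine
    have hKB : K * B = -P + 1 := by
      have h7 := hvals (-1) (le_refl _) (by omega)
      push_cast at h7
      rw [hB] at h7
      have : ((K*B : ℤ):ℝ) = ((-P+1 : ℤ):ℝ) := by push_cast; linarith [h7]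
      exact_mod_cast this
    have hdvd : K ∣ m := ⟨A + (m-1)*B, by linear_combination -hKA - (m-1)*hKB⟩
    exact ⟨A, K, P, hK1, hA, hKA, hub, heq, Or.inr ⟨hK2, hdvd⟩⟩
  · -- there is a breakpoint: derive a contradiction with K ≥ 2
    exfalso
    push_neg at hnob
    obtain ⟨b, ⟨hb0, hb2, hbne⟩, hbmax⟩ := Int.exists_greatest_of_bdd
      (⟨m-2, fun z hz => hz.2.1⟩ : ∃ bd : ℤ, ∀ z : ℤ,
        (0 ≤ z ∧ z ≤ m-2 ∧ rho f (z-1) ≠ rho f z) → z ≤ bd)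
      (by obtain ⟨j, h1, h2, h3⟩ := hnob; exact ⟨j, h1, h2, h3⟩)
    have hchain : ∀ j : ℤ, b ≤ j → j ≤ m-2 → rho f j = rho f (m-2) := by
      apply rho_chain
      intro j hj1 hj2
      by_contra hne
      have := hbmax j ⟨by omega, hj2, hne⟩
      omega
    have hKvals : ∀ j : ℤ, b ≤ j → j ≤ m-1 → (K:ℝ) * f (ee (j:ℝ)) = (P:ℝ)*(j:ℝ) + 1 :=
      chain_vals b (m-1) K P
        (fun j h1 h2 => hKrho' j (by omega) (by omega) (hchain j h1 (by omega))) hend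
    -- the left support line at b
    have cb2 : ((b-1:ℤ):ℝ)+1 = (b:ℝ) := by push_cast; ring
    have cb1 : ((b-1:ℤ):ℝ) = (b:ℝ)-1 := by push_cast; ring
    have hBb : ee (b:ℝ) ∈ intervalBox (-1) (m-1) := intB (by omega) (by omega)
    have hBbm1 : ee ((b:ℝ)-1) ∈ intervalBox (-1) (m-1) := by
      have := intB (m := m) (j := b-1) (by omega) (by omega)
      rwa [cb1] at this
    have hUAb : ∀ z : ℝ, (b:ℝ)-1 ≤ z → z ≤ (b:ℝ) →
        f (ee z) = f (ee ((b:ℝ)-1)) + (z - ((b:ℝ)-1)) * rho f (b-1) := by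
      intro z hz1 hz2
      have h9 := unit_affine hproj hgr (j := b-1) (by omega) (by omega) (y := z)
        (by rw [cb1]; exact hz1) (by rw [cb2]; exact hz2)
      unfold rho
      rw [cb2, cb1] at h9
      rw [cb2, cb1]
      exact h9
    have haffb : ∀ z : ℝ, (b:ℝ)-1 ≤ z → z ≤ (b:ℝ) →
        f (ee z) = f (ee ((b:ℝ)-1/2)) + rho f (b-1) * (z - ((b:ℝ)-1/2)) := by
      intro z h1 h2
      have e1 := hUAb z h1 h2
      have e2 := hUAb ((b:ℝ)-1/2) (by linarith) (by linarith)
      linear_combination e1 - e2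
    obtain ⟨L, Q, hL1, hubL, heqL⟩ := supportLine hm hproj hgr hhone hf0 (x := (b:ℝ)-1/2)
      (r₀ := rho f (b-1)) hBbm1 hBb (by linarith) (by linarith) haffb
    have hLrho : (L:ℝ) * rho f (b-1) = (Q:ℝ) := by
      have e1 := heqL ((b:ℝ)-1) (le_refl _) (by linarith)
      have e2 := heqL (b:ℝ) (by linarith) (le_refl _)
      have hrb : rho f (b-1) = f (ee (b:ℝ)) - f (ee ((b:ℝ)-1)) := by
        unfold rho; rw [cb2, cb1]
      rw [hrb]
      linear_combination e2 - e1
    have hKb := hKvals b (le_refl _) (by omega)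
    have hLb := heqL (b:ℝ) (by linarith) (le_refl _)
    -- slopes differ
    have hrholt : rho f b < rho f (b-1) :=
      lt_of_le_of_ne (hmono b hb0 hb2) (fun h => hbne h.symm)
    have hKrhob : (K:ℝ) * rho f b = (P:ℝ) := hKrho' b (by omega) hb2 (hchain b (le_refl _) hb2)
    have hKposR : (0:ℝ) < (K:ℝ) := by exact_mod_cast hK1
    have hLposR : (0:ℝ) < (L:ℝ) := by exact_mod_cast hL1
    have hnePL : (P:ℝ)*(L:ℝ) ≠ (Q:ℝ)*(K:ℝ) := by
      have hdiff : (P:ℝ)*(L:ℝ) - (Q:ℝ)*(K:ℝ) = (K:ℝ)*(L:ℝ)*(rho f b - rho f (b-1)) := by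
        linear_combination (K:ℝ) * hLrho - (L:ℝ) * hKrhob
      intro h
      rw [h] at hdiff
      have h8 : (0:ℝ) < (K:ℝ)*(L:ℝ)*(rho f (b-1) - rho f b) :=
        mul_pos (mul_pos hKposR hLposR) (by linarith)
      nlinarith [hdiff, h8]
    obtain ⟨v, hv⟩ := kink (b:ℝ) hBb K P L Q hK1 hL1 hub hKb hubL hLb hnePL
    have hKv : K * v = P*b+1 := by
      have : ((K*v : ℤ):ℝ) = ((P*b+1 : ℤ):ℝ) := by push_cast; rw [← hv]; linarith [hKb]
      exact_mod_cast this
    have hLv : L * v = Q*b+1 := by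
      have : ((L*v : ℤ):ℝ) = ((Q*b+1 : ℤ):ℝ) := by push_cast; rw [← hv]; linarith [hLb]
      exact_mod_cast this
    have hb1 : 1 ≤ b := by
      rcases eq_or_lt_of_le hb0 with h | h
      · exfalso
        have h7 : K * v = 1 := by rw [hKv, ← h]; ring
        have : K ∣ 1 := ⟨v, h7.symm⟩
        have := Int.le_of_dvd one_pos this
        omega
      · omega
    -- D ≥ 1
    have hDeq : (K:ℝ)*(Q:ℝ) - (L:ℝ)*(P:ℝ) = (K:ℝ)*(L:ℝ)*(rho f (b-1) - rho f b) := by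
      linear_combination (L:ℝ) * hKrhob - (K:ℝ) * hLrho
    have hDpos : (0:ℤ) < K*Q - L*P := by
      have h8 : (0:ℝ) < ((K*Q - L*P : ℤ):ℝ) := by
        push_cast
        rw [hDeq]
        exact mul_pos (mul_pos hKposR hLposR) (by linarith)
      exact_mod_cast h8
    have hbD : b*(K*Q - L*P) = L - K := by linear_combination L*hKv - K*hLv
    -- the extent of the left line
    have hbw : ∃ b'' w : ℤ, -1 ≤ b'' ∧ b'' ≤ b-1 ∧ L * w = Q*b''+1 := by
      by_cases hex2 : ∃ j : ℤ, 0 ≤ j ∧ j ≤ b-1 ∧ rho f (j-1) ≠ rho f j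
      · obtain ⟨b'', ⟨hb''0, hb''2, hb''ne⟩, hb''max⟩ := Int.exists_greatest_of_bdd
          (⟨b-1, fun z hz => hz.2.1⟩ : ∃ bd : ℤ, ∀ z : ℤ,
            (0 ≤ z ∧ z ≤ b-1 ∧ rho f (z-1) ≠ rho f z) → z ≤ bd) hex2
        have hchainL : ∀ j : ℤ, b'' ≤ j → j ≤ b-1 → rho f j = rho f (b-1) := by
          apply rho_chain
          intro j hj1 hj2
          by_contra hne
          have := hb''max j ⟨by omega, hj2, hne⟩
          omega
        have hLvals : ∀ j : ℤ, b'' ≤ j → j ≤ b → (L:ℝ) * f (ee (j:ℝ)) = (Q:ℝ)*(j:ℝ) + 1 :=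
          chain_vals b'' b L Q
            (fun j h1 h2 => by rw [hchainL j h1 (by omega)]; exact hLrho) hLb
        -- second support line at b''
        have cb2' : ((b''-1:ℤ):ℝ)+1 = (b'':ℝ) := by push_cast; ring
        have cb1' : ((b''-1:ℤ):ℝ) = (b'':ℝ)-1 := by push_cast; ring
        have hBb'' : ee (b'':ℝ) ∈ intervalBox (-1) (m-1) := intB (by omega) (by omega)
        have hBb''m1 : ee ((b'':ℝ)-1) ∈ intervalBox (-1) (m-1) := by
          have := intB (m := m) (j := b''-1) (by omega) (by omega)
          rwa [cb1'] at this
        have hUAb'' : ∀ z : ℝ, (b'':ℝ)-1 ≤ z → z ≤ (b'':ℝ) →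
            f (ee z) = f (ee ((b'':ℝ)-1)) + (z - ((b'':ℝ)-1)) * rho f (b''-1) := by
          intro z hz1 hz2
          have h9 := unit_affine hproj hgr (j := b''-1) (by omega) (by omega) (y := z)
            (by rw [cb1']; exact hz1) (by rw [cb2']; exact hz2)
          unfold rho
          rw [cb2', cb1'] at h9
          rw [cb2', cb1']
          exact h9
        have haffb'' : ∀ z : ℝ, (b'':ℝ)-1 ≤ z → z ≤ (b'':ℝ) →
            f (ee z) = f (ee ((b'':ℝ)-1/2)) + rho f (b''-1) * (z - ((b'':ℝ)-1/2)) := by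
          intro z h1 h2
          have e1 := hUAb'' z h1 h2
          have e2 := hUAb'' ((b'':ℝ)-1/2) (by linarith) (by linarith)
          linear_combination e1 - e2
        obtain ⟨L2, Q2, hL21, hubL2, heqL2⟩ := supportLine hm hproj hgr hhone hf0
          (x := (b'':ℝ)-1/2) (r₀ := rho f (b''-1)) hBb''m1 hBb'' (by linarith) (by linarith) haffb''
        have hL2rho : (L2:ℝ) * rho f (b''-1) = (Q2:ℝ) := by
          have e1 := heqL2 ((b'':ℝ)-1) (le_refl _) (by linarith)
          have e2 := heqL2 (b'':ℝ) (by linarith) (le_refl _)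
          have hrb : rho f (b''-1) = f (ee (b'':ℝ)) - f (ee ((b'':ℝ)-1)) := by
            unfold rho; rw [cb2', cb1']
          rw [hrb]
          linear_combination e2 - e1
        have hQb'' := hLvals b'' (le_refl _) (by omega)
        have hL2b'' := heqL2 (b'':ℝ) (by linarith) (le_refl _)
        have hrholt'' : rho f b'' < rho f (b''-1) :=
          lt_of_le_of_ne (hmono b'' hb''0 (by omega)) (fun h => hb''ne h.symm)
        have hQrho'' : (L:ℝ) * rho f b'' = (Q:ℝ) := by
          rw [hchainL b'' (le_refl _) (by omega)]; exact hLrho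
        have hL2posR : (0:ℝ) < (L2:ℝ) := by exact_mod_cast hL21
        have hnePL'' : (Q:ℝ)*(L2:ℝ) ≠ (Q2:ℝ)*(L:ℝ) := by
          have hdiff : (Q:ℝ)*(L2:ℝ) - (Q2:ℝ)*(L:ℝ) = (L:ℝ)*(L2:ℝ)*(rho f b'' - rho f (b''-1)) := by
            linear_combination (L:ℝ) * hL2rho - (L2:ℝ) * hQrho''
          intro h
          rw [h] at hdiff
          have h8 : (0:ℝ) < (L:ℝ)*(L2:ℝ)*(rho f (b''-1) - rho f b'') :=
            mul_pos (mul_pos hLposR hL2posR) (by linarith)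
          nlinarith [hdiff, h8]
        obtain ⟨w, hw⟩ := kink (b'':ℝ) hBb'' L Q L2 Q2 hL1 hL21 hubL hQb'' hubL2 hL2b'' hnePL''
        refine ⟨b'', w, by omega, by omega, ?_⟩
        have : ((L*w : ℤ):ℝ) = ((Q*b''+1 : ℤ):ℝ) := by push_cast; rw [← hw]; linarith [hQb'']
        exact_mod_cast this
      · push_neg at hex2
        have hchainL : ∀ j : ℤ, -1 ≤ j → j ≤ b-1 → rho f j = rho f (b-1) :=
          rho_chain (-1) (b-1) (fun j hj1 hj2 => hex2 j (by omega) hj2)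
        have hLvals : ∀ j : ℤ, -1 ≤ j → j ≤ b → (L:ℝ) * f (ee (j:ℝ)) = (Q:ℝ)*(j:ℝ) + 1 :=
          chain_vals (-1) b L Q
            (fun j h1 h2 => by rw [hchainL j h1 (by omega)]; exact hLrho) hLb
        refine ⟨-1, B, le_refl _, by omega, ?_⟩
        have h7 := hLvals (-1) (le_refl _) (by omega)
        push_cast at h7
        rw [hB] at h7
        have : ((L*B : ℤ):ℝ) = ((Q*(-1)+1 : ℤ):ℝ) := by push_cast; linarith [h7]
        exact_mod_cast this
    obtain ⟨b'', w, hb''1, hb''2, hLw⟩ := hbw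
    have hcop : IsCoprime L Q := ⟨v, -b, by linear_combination hLv⟩
    have hdvdQ : L ∣ Q * (b - b'') := ⟨v - w, by linear_combination hLw - hLv⟩
    have hdvdL : L ∣ (b - b'') := hcop.dvd_of_dvd_mul_left hdvdQ
    have hLle : L ≤ b - b'' := Int.le_of_dvd (by omega) hdvdL
    have h5 : b ≤ b*(K*Q - L*P) := le_mul_of_one_le_right (by omega) (by omega)
    have h6 : b ≤ L - K := by rw [← hbD]; exact h5
    omega

lemma two_lemma (m W Kb Kc : ℤ) (hm : 4 ≤ m) (hb : 2 ≤ Kb) (hc : 2 ≤ Kc) (hW : 1 ≤ W)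
    (hcop2 : IsCoprime (m-1) 2) (hcopb : IsCoprime (m-1) Kb) (_hcopc : IsCoprime (m-1) Kc)
    (hEq : (m-1)*W = 4 - (Kb-2)*(Kc-2)) : False := by
  have huv : 0 ≤ (Kb-2)*(Kc-2) := mul_nonneg (by omega) (by omega)
  have hge : m - 1 ≤ (m-1)*W := le_mul_of_one_le_right (by omega) hW
  have hle : (Kb-2)*(Kc-2) ≤ 1 := by omega
  rcases eq_or_lt_of_le huv with h0 | h1
  · -- product 0 : (m-1)*W = 4
    have h4 : (m-1)*W = 4 := by omega
    have hdvd : (m-1) ∣ 4 := ⟨W, h4.symm⟩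
    have hle4 : m - 1 ≤ 4 := Int.le_of_dvd (by norm_num) hdvd
    rcases (by omega : m - 1 = 3 ∨ m - 1 = 4) with h | h
    · rw [h] at h4; omega
    · rw [h] at hcop2
      have := hcop2.isUnit_of_dvd' (by norm_num : (2:ℤ) ∣ 4) (dvd_refl 2)
      rw [Int.isUnit_iff] at this
      omega
  · have huv1 : (Kb-2)*(Kc-2) = 1 := by omega
    have hKb3 : Kb = 3 := by
      have hdvd : (Kb-2) ∣ 1 := ⟨Kc-2, huv1.symm⟩
      have := Int.le_of_dvd one_pos hdvd
      have h2 : 0 < Kb - 2 := by nlinarith [huv1]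
      omega
    have h3 : (m-1)*W = 3 := by omega
    have hdvd : (m-1) ∣ 3 := ⟨W, h3.symm⟩
    have hle3 : m - 1 ≤ 3 := Int.le_of_dvd (by norm_num) hdvd
    have hm3 : m - 1 = 3 := by omega
    rw [hm3, hKb3] at hcopb
    have := hcopb.isUnit_of_dvd' (dvd_refl 3) (dvd_refl 3)
    rw [Int.isUnit_iff] at this
    omega

lemma allge2 (m W K1 K2 K3 : ℤ) (hm : 4 ≤ m) (h1 : 2 ≤ K1) (h2 : 2 ≤ K2) (h3 : 2 ≤ K3)
    (hc1 : IsCoprime (m-1) K1) (hc2 : IsCoprime (m-1) K2) (hc3 : IsCoprime (m-1) K3)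
    (hW : 1 ≤ W)
    (hEq : (m-1)*W = K1*K2 + K1*K3 + K2*K3 - K1*K2*K3) : False := by
  have hge : m - 1 ≤ (m-1)*W := le_mul_of_one_le_right (by omega) hW
  have hS3 : 3 ≤ K1*K2 + K1*K3 + K2*K3 - K1*K2*K3 := by omega
  have hsome2 : K1 = 2 ∨ K2 = 2 ∨ K3 = 2 := by
    by_contra hno
    push_neg at hno
    have g1 : 3 ≤ K1 := by omega
    have g2 : 3 ≤ K2 := by omega
    have g3 : 3 ≤ K3 := by omega
    nlinarith [mul_nonneg (by omega : (0:ℤ) ≤ K1-3) (by omega : (0:ℤ) ≤ K2-3),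
      mul_nonneg (mul_nonneg (by omega : (0:ℤ) ≤ K1-3) (by omega : (0:ℤ) ≤ K2-3)) (by omega : (0:ℤ) ≤ K3-3),
      mul_nonneg (by omega : (0:ℤ) ≤ K1-3) (by omega : (0:ℤ) ≤ K3-3),
      mul_nonneg (by omega : (0:ℤ) ≤ K2-3) (by omega : (0:ℤ) ≤ K3-3)]
  rcases hsome2 with h | h | h
  · exact two_lemma m W K2 K3 hm h2 h3 hW (h ▸ hc1) hc2 hc3 (by rw [h] at hEq; linear_combination hEq)
  · exact two_lemma m W K1 K3 hm h1 h3 hW (h ▸ hc2) hc1 hc3 (by rw [h] at hEq; linear_combination hEq)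
  · exact two_lemma m W K1 K2 hm h1 h2 hW (h ▸ hc3) hc1 hc2 (by rw [h] at hEq; linear_combination hEq)

lemma endTwoW1 (m K K' : ℤ) (hm : 4 ≤ m) (hK : 2 ≤ K) (hK' : 2 ≤ K')
    (hdK : K ∣ m) (hdK' : K' ∣ m) (hKle : K ≤ K')
    (hEq : K + K' = m - 1) : m = 4 ∨ m = 6 := by
  have hK'm : K' ≤ m - 3 := by omega
  have hdK'2 := hdK'
  obtain ⟨t, ht⟩ := hdK'
  have ht2 : 2 ≤ t := by
    rcases (by omega : t ≤ 1 ∨ 2 ≤ t) with h | h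
    · exfalso
      have : K' * t ≤ K' * 1 := mul_le_mul_of_nonneg_left h (by omega)
      omega
    · exact h
  have h2K : K' * 2 ≤ m := by
    rw [ht]
    exact mul_le_mul_of_nonneg_left ht2 (by omega)
  have hge : m - 1 ≤ 2 * K' := by omega
  rcases (by omega : 2*K' = m - 1 ∨ 2*K' = m) with h | h
  · exfalso
    have hd1 : K' ∣ m - 1 := ⟨2, by omega⟩
    have hd : K' ∣ m - (m-1) := dvd_sub hdK'2 hd1
    rw [show m - (m-1) = 1 by ring] at hd
    have := Int.le_of_dvd one_pos hd
    omega
  · have hKK : K = K' - 1 := by omega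
    have hd2 : K ∣ 2 := by
      have hmm : m = 2*K + 2 := by omega
      have h5 : K ∣ 2*K + 2 := by rw [← hmm]; exact hdK
      have h6 := dvd_sub h5 (⟨2, rfl⟩ : K ∣ K*2)
      rwa [show 2*K+2 - K*2 = 2 by ring] at h6
    have hK2 : K = 2 := by
      have := Int.le_of_dvd (by norm_num) hd2
      omega
    right; omega


lemma endTwo (m W K K' : ℤ) (hm : 4 ≤ m) (hK : 1 ≤ K) (hK' : 1 ≤ K')
    (hdK : K ∣ m) (hdK' : K' ∣ m) (hcopK : IsCoprime (m-1) K) (hcopK' : IsCoprime (m-1) K')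
    (hW : 1 ≤ W) (hEq : (m-1)*W = K + K') : m = 4 ∨ m = 6 := by
  have hKm : K ≤ m := Int.le_of_dvd (by omega) hdK
  have hK'm : K' ≤ m := Int.le_of_dvd (by omega) hdK'
  have hWle : W ≤ 2 := by
    by_contra h
    push_neg at h
    have h3 : (m-1)*3 ≤ (m-1)*W := mul_le_mul_of_nonneg_left (by omega) (by omega)
    rw [hEq] at h3
    omega
  have hsub : ∀ J : ℤ, 2 ≤ J → J ∣ m → J = m - 2 → m = 4 := by
    intro J h2 hdJ hJ
    rw [hJ] at hdJ h2
    have hd : (m-2) ∣ m - (m-2) := dvd_sub hdJ (dvd_refl _)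
    rw [show m - (m-2) = 2 by ring] at hd
    have := Int.le_of_dvd (by norm_num) hd
    omega
  rcases (by omega : W = 1 ∨ W = 2) with h | h
  · rw [h, mul_one] at hEq
    rcases (by omega : K = 1 ∨ 2 ≤ K) with hc | hc
    · exact Or.inl (hsub K' (by omega) hdK' (by omega))
    rcases (by omega : K' = 1 ∨ 2 ≤ K') with hc' | hc'
    · exact Or.inl (hsub K (by omega) hdK (by omega))
    rcases le_total K K' with hle | hle
    · exact endTwoW1 m K K' hm hc hc' hdK hdK' hle (by omega)
    · exact endTwoW1 m K' K hm hc' hc hdK' hdK hle (by omega)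
  · rw [h] at hEq
    have hKge : m-2 ≤ K := by omega
    have hK'ge : m-2 ≤ K' := by omega
    have hne : K ≠ m-1 := by
      intro hh
      have := hcopK.isUnit_of_dvd' (dvd_refl _) (by rw [hh])
      rw [Int.isUnit_iff] at this
      omega
    have hne' : K' ≠ m-1 := by
      intro hh
      have := hcopK'.isUnit_of_dvd' (dvd_refl _) (by rw [hh])
      rw [Int.isUnit_iff] at this
      omega
    rcases (by omega : K = m-2 ∨ K = m) with hc | hc
    · exact Or.inl (hsub K (by omega) hdK hc)
    · exact Or.inl (hsub K' (by omega) hdK' (by omega))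

lemma endgame (m : ℤ) (hm : 2 < m) (K1 K2 K3 P1 P2 P3 A1 A2 A3 W : ℤ)
    (h11 : 1 ≤ K1) (h12 : 1 ≤ K2) (h13 : 1 ≤ K3)
    (hA1 : K1*A1 = P1*(m-1)+1) (hA2 : K2*A2 = P2*(m-1)+1) (hA3 : K3*A3 = P3*(m-1)+1)
    (hd1 : K1 = 1 ∨ (2 ≤ K1 ∧ K1 ∣ m)) (hd2 : K2 = 1 ∨ (2 ≤ K2 ∧ K2 ∣ m))
    (hd3 : K3 = 1 ∨ (2 ≤ K3 ∧ K3 ∣ m))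
    (hW : 1 ≤ W)
    (hEq : (m-1)*W = K1*K2 + K1*K3 + K2*K3 - K1*K2*K3) :
    m = 3 ∨ m = 4 ∨ m = 6 := by
  by_cases hm3 : m = 3
  · exact Or.inl hm3
  have hm4 : 4 ≤ m := by omega
  have hc1 : IsCoprime (m-1) K1 := ⟨-P1, A1, by linear_combination hA1⟩
  have hc2 : IsCoprime (m-1) K2 := ⟨-P2, A2, by linear_combination hA2⟩
  have hc3 : IsCoprime (m-1) K3 := ⟨-P3, A3, by linear_combination hA3⟩
  have hdvd1 : K1 ∣ m := by rcases hd1 with h | h; exacts [h ▸ one_dvd m, h.2]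
  have hdvd2 : K2 ∣ m := by rcases hd2 with h | h; exacts [h ▸ one_dvd m, h.2]
  have hdvd3 : K3 ∣ m := by rcases hd3 with h | h; exacts [h ▸ one_dvd m, h.2]
  by_cases hone : K1 = 1 ∨ K2 = 1 ∨ K3 = 1
  · rcases hone with h | h | h
    · refine Or.inr (endTwo m W K2 K3 hm4 h12 h13 hdvd2 hdvd3 hc2 hc3 hW ?_)
      rw [h] at hEq
      linear_combination hEq
    · refine Or.inr (endTwo m W K1 K3 hm4 h11 h13 hdvd1 hdvd3 hc1 hc3 hW ?_)
      rw [h] at hEq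
      linear_combination hEq
    · refine Or.inr (endTwo m W K1 K2 hm4 h11 h12 hdvd1 hdvd2 hc1 hc2 hW ?_)
      rw [h] at hEq
      linear_combination hEq
  · push_neg at hone
    exact absurd (allge2 m W K1 K2 K3 hm4 (by omega) (by omega) (by omega) hc1 hc2 hc3 hW hEq) id


end BL

open BL in
/-- If `[-1, m-1]` with `m > 2` carries normalized Fano data with exactly three functions,
then `m ∈ {3, 4, 6}`. -/
theorem base_length_three_four_or_six
    (m : ℤ) (hm : 2 < m)
    (f : Fin 3 → (Fin 1 → ℝ) → ℝ)
    (hf : NormalizedFanoData 1 3 (intervalBox (-1) (m - 1)) f) :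
    m = 3 ∨ m = 4 ∨ m = 6 := by
  obtain ⟨hicpa, hhone, hpos, hnaff, hsum, hsumInt, hfront⟩ := hf
  have hmR : (2:ℝ) < (m:ℝ) := by exact_mod_cast hm
  -- the right endpoint is on the frontier
  have hXB : ee ((m:ℝ)-1) ∈ intervalBox (-1) (m-1) := mem_ibox.2 ⟨by linarith, le_refl _⟩
  have hcont : Continuous ee := continuous_pi (fun _ => continuous_id)
  have hXfr : ee ((m:ℝ)-1) ∈ frontier (intervalBox (-1) (m-1)) := by
    constructor
    · exact subset_closure hXB
    · intro hin
      have h1 : intervalBox (-1) (m-1) ∈ nhds (ee ((m:ℝ)-1)) := mem_interior_iff_mem_nhds.1 hin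
      have h2 : ee ⁻¹' (intervalBox (-1) (m-1)) ∈ nhds ((m:ℝ)-1) :=
        hcont.continuousAt.preimage_mem_nhds h1
      obtain ⟨ε, hε, hball⟩ := Metric.mem_nhds_iff.1 h2
      have h3 : ((m:ℝ)-1) + ε/2 ∈ Metric.ball ((m:ℝ)-1) ε := by
        rw [Metric.mem_ball, Real.dist_eq]
        rw [abs_of_nonneg (by linarith)]
        linarith
      have h4 := hball h3
      have h5 := (mem_ibox.1 h4).2
      linarith
  -- interior point m - 3/2
  have hMint : ee ((m:ℝ)-3/2) ∈ interior (intervalBox (-1) (m-1)) := by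
    have hV : IsOpen {p : Fin 1 → ℝ | (-1:ℝ) < p 0 ∧ p 0 < ((m - 1 : ℤ):ℝ)} :=
      (isOpen_lt continuous_const (continuous_apply 0)).inter
        (isOpen_lt (continuous_apply 0) continuous_const)
    have hsub : {p : Fin 1 → ℝ | (-1:ℝ) < p 0 ∧ p 0 < ((m - 1 : ℤ):ℝ)} ⊆ intervalBox (-1) (m-1) := by
      rintro p ⟨a, b⟩
      exact ⟨by push_cast; linarith, le_of_lt b⟩
    apply interior_maximal hsub hV
    constructor
    · show (-1:ℝ) < ee ((m:ℝ)-3/2) 0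
      show (-1:ℝ) < (m:ℝ)-3/2
      linarith
    · show ee ((m:ℝ)-3/2) 0 < ((m - 1 : ℤ):ℝ)
      push_cast
      show (m:ℝ)-3/2 < (m:ℝ)-1
      linarith
  -- sum = 1 at the right endpoint
  have hS1 : f 0 (ee ((m:ℝ)-1)) + f 1 (ee ((m:ℝ)-1)) + f 2 (ee ((m:ℝ)-1)) = 1 := by
    rcases hfront _ hXfr with h | ⟨u, hu1, hu2⟩
    · rw [Fin.sum_univ_three] at h
      norm_num at h
      linarith [h]
    · exfalso
      rw [dotZ_ee] at hu1
      have hz : ((m-1) * u 0 : ℤ) = 1 := by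
        have : (((m-1) * u 0 : ℤ):ℝ) = 1 := by push_cast; linarith [hu1]
        exact_mod_cast this
      have hd : (m-1) ∣ 1 := ⟨u 0, hz.symm⟩
      have := Int.le_of_dvd one_pos hd
      omega
  -- sum > 1 at interior point
  have hSmid : 1 < f 0 (ee ((m:ℝ)-3/2)) + f 1 (ee ((m:ℝ)-3/2)) + f 2 (ee ((m:ℝ)-3/2)) := by
    have := hsumInt _ hMint
    rw [Fin.sum_univ_three] at this
    norm_num at this
    linarith [this]
  -- profiles
  obtain ⟨S0, hproj0, hgr0⟩ := hicpa 0
  obtain ⟨S1, hproj1, hgr1⟩ := hicpa 1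
  obtain ⟨S2, hproj2, hgr2⟩ := hicpa 2
  obtain ⟨A1, K1, P1, hK11, hA1v, hKA1, hub1, heq1, hd1⟩ :=
    profile hm hproj0 hgr0 (hhone 0) (hpos 0) (hnaff 0)
  obtain ⟨A2, K2, P2, hK12, hA2v, hKA2, hub2, heq2, hd2⟩ :=
    profile hm hproj1 hgr1 (hhone 1) (hpos 1) (hnaff 1)
  obtain ⟨A3, K3, P3, hK13, hA3v, hKA3, hub3, heq3, hd3⟩ :=
    profile hm hproj2 hgr2 (hhone 2) (hpos 2) (hnaff 2)
  have hK1R : (0:ℝ) < (K1:ℝ) := by exact_mod_cast hK11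
  have hK2R : (0:ℝ) < (K2:ℝ) := by exact_mod_cast hK12
  have hK3R : (0:ℝ) < (K3:ℝ) := by exact_mod_cast hK13
  -- evaluate the last-interval lines at the two points
  have e10 := heq1 ((m:ℝ)-1) (by linarith) (le_refl _)
  have e20 := heq2 ((m:ℝ)-1) (by linarith) (le_refl _)
  have e30 := heq3 ((m:ℝ)-1) (by linarith) (le_refl _)
  have e1m := heq1 ((m:ℝ)-3/2) (by linarith) (by linarith)
  have e2m := heq2 ((m:ℝ)-3/2) (by linarith) (by linarith)
  have e3m := heq3 ((m:ℝ)-3/2) (by linarith) (by linarith)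
  set T : ℝ := (P1:ℝ)*(K2:ℝ)*(K3:ℝ) + (P2:ℝ)*(K1:ℝ)*(K3:ℝ) + (P3:ℝ)*(K1:ℝ)*(K2:ℝ) with hT
  set U : ℝ := (K2:ℝ)*(K3:ℝ) + (K1:ℝ)*(K3:ℝ) + (K1:ℝ)*(K2:ℝ) with hU
  clear_value T U
  have hT1 : T*((m:ℝ)-1) + U = (K1:ℝ)*(K2:ℝ)*(K3:ℝ) := by
    rw [hT, hU]
    have comb : (K1:ℝ)*(K2:ℝ)*(K3:ℝ) *
        (f 0 (ee ((m:ℝ)-1)) + f 1 (ee ((m:ℝ)-1)) + f 2 (ee ((m:ℝ)-1)))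
        = (K1:ℝ)*(K2:ℝ)*(K3:ℝ) := by rw [hS1, mul_one]
    linear_combination comb - ((K2:ℝ)*(K3:ℝ)*e10 + (K1:ℝ)*(K3:ℝ)*e20 + (K1:ℝ)*(K2:ℝ)*e30)
  have hT2 : T*((m:ℝ)-3/2) + U > (K1:ℝ)*(K2:ℝ)*(K3:ℝ) := by
    have hKKK : (0:ℝ) < (K1:ℝ)*(K2:ℝ)*(K3:ℝ) := by positivity
    have comb := mul_lt_mul_of_pos_left hSmid hKKK
    rw [mul_one] at comb
    have expand : T*((m:ℝ)-3/2) + U = (K2:ℝ)*(K3:ℝ)*((P1:ℝ)*((m:ℝ)-3/2)+1)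
        + (K1:ℝ)*(K3:ℝ)*((P2:ℝ)*((m:ℝ)-3/2)+1) + (K1:ℝ)*(K2:ℝ)*((P3:ℝ)*((m:ℝ)-3/2)+1) := by
      rw [hT, hU]; ring
    rw [expand]
    calc (K1:ℝ)*(K2:ℝ)*(K3:ℝ) <
        (K1:ℝ)*(K2:ℝ)*(K3:ℝ) * (f 0 (ee ((m:ℝ)-3/2)) + f 1 (ee ((m:ℝ)-3/2)) + f 2 (ee ((m:ℝ)-3/2))) := comb
      _ = (K2:ℝ)*(K3:ℝ)*((K1:ℝ) * f 0 (ee ((m:ℝ)-3/2)))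
          + (K1:ℝ)*(K3:ℝ)*((K2:ℝ) * f 1 (ee ((m:ℝ)-3/2)))
          + (K1:ℝ)*(K2:ℝ)*((K3:ℝ) * f 2 (ee ((m:ℝ)-3/2))) := by ring
      _ = _ := by rw [e1m, e2m, e3m]
  have hTneg : T < 0 := by
    have hdiff : T*((m:ℝ)-3/2) - T*((m:ℝ)-1) = -T/2 := by ring
    linarith [hT1, hT2, hdiff]
  have hTZ : ((P1*K2*K3 + P2*K1*K3 + P3*K1*K2 : ℤ):ℝ) = T := by
    rw [hT]; push_cast; ring
  have hUZ : ((K2*K3 + K1*K3 + K1*K2 : ℤ):ℝ) = U := by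
    rw [hU]; push_cast; ring
  have hTZneg : (P1*K2*K3 + P2*K1*K3 + P3*K1*K2 : ℤ) < 0 := by
    have h9 : ((P1*K2*K3 + P2*K1*K3 + P3*K1*K2 : ℤ):ℝ) < 0 := by rw [hTZ]; exact hTneg
    exact_mod_cast h9
  set W : ℤ := -(P1*K2*K3 + P2*K1*K3 + P3*K1*K2) with hW
  clear_value W
  have hW1 : 1 ≤ W := by omega
  have hEqZ : (m-1)*W = K1*K2 + K1*K3 + K2*K3 - K1*K2*K3 := by
    have h12 : (((m-1)*W : ℤ):ℝ) = ((K1*K2 + K1*K3 + K2*K3 - K1*K2*K3 : ℤ):ℝ) := by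
      have hc1 : ((m-1 : ℤ):ℝ) = (m:ℝ)-1 := by push_cast; ring
      have hc2 : ((W:ℤ):ℝ) = -((P1*K2*K3 + P2*K1*K3 + P3*K1*K2 : ℤ):ℝ) := by
        rw [hW]; push_cast; ring
      rw [Int.cast_mul, hc1, hc2, hTZ]
      have hc3 : ((K1*K2 + K1*K3 + K2*K3 - K1*K2*K3 : ℤ):ℝ)
          = U - ((K1:ℝ)*(K2:ℝ)*(K3:ℝ)) := by rw [hU]; push_cast; ring
      rw [hc3]
      linarith [hT1]
    exact_mod_cast h12
  exact endgame m hm K1 K2 K3 P1 P2 P3 A1 A2 A3 W hK11 hK12 hK13 hKA1 hKA2 hKA3 hd1 hd2 hd3 hW1 hEqZ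


end
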